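/- Let u₁,…,u_m ∈ ℝᵏ be stencil points, let σ index the monomials of total degree ≤ d in k variables, let V be the m×|σ| generalized Vandermonde matrix with V(i,s) equal to the monomial s evaluated at uᵢ, let W be an m×m diagonal matrix with positive diagonal entries, and assume VᵀW²V is invertible. Define the generalized Lagrange polynomial (GLP) basis functions φⱼ(u) = Σ_{s∈σ} C(s,j)·u^s, where C = (VᵀW²V)⁻¹VᵀW². Then the GLP basis functions form a partition of unity: for every u ∈ ℝᵏ, Σ_{j=1}^{m} φⱼ(u) = 1. -/

import Mathlib

open Matrix BigOperators

/-- the weighted least-squares GLP basis functions form a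
partition of unity. -/
theorem glp_partition_of_unity (k d m : ℕ) (pts : Fin m → Fin k → ℝ)
    (V : Matrix (Fin m) {s : Fin k → Fin (d + 1) // ∑ i, (s i : ℕ) ≤ d} ℝ)
    (hV : ∀ i s, V i s = ∏ l, pts i l ^ ((s.1 l : ℕ)))
    (w : Fin m → ℝ) (hw : ∀ i, 0 < w i)
    (W : Matrix (Fin m) (Fin m) ℝ) (hW : W = Matrix.diagonal w)
    (hInv : IsUnit (Vᵀ * (W * W) * V))
    (C : Matrix {s : Fin k → Fin (d + 1) // ∑ i, (s i : ℕ) ≤ d} (Fin m) ℝ)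
    (hC : C = (Vᵀ * (W * W) * V)⁻¹ * Vᵀ * (W * W))
    (φ : Fin m → (Fin k → ℝ) → ℝ)
    (hφ : ∀ j u, φ j u = ∑ s, C s j * ∏ l, u l ^ ((s.1 l : ℕ)))
    (u : Fin k → ℝ) :
    ∑ j, φ j u = 1 := by
  classical
  have hd : (∑ i : Fin k, (((fun _ => (0 : Fin (d+1))) i : ℕ))) ≤ d := by simp
  set s₀ : {s : Fin k → Fin (d + 1) // ∑ i, (s i : ℕ) ≤ d} := ⟨fun _ => 0, hd⟩ with hs₀
  set e : {s : Fin k → Fin (d + 1) // ∑ i, (s i : ℕ) ≤ d} → ℝ :=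
    fun s => if s = s₀ then 1 else 0 with he
  have hVe : V *ᵥ e = fun _ => 1 := by
    funext i
    simp only [mulVec, dotProduct, he, mul_ite, mul_one, mul_zero]
    rw [Finset.sum_ite_eq' Finset.univ s₀ (fun s => V i s)]
    simp [hV, hs₀]
  have hCV : C * V = 1 := by
    have hInv' := hInv
    simp only [Matrix.mul_assoc] at hInv'
    rw [hC]
    simp only [Matrix.mul_assoc]
    exact Matrix.nonsing_inv_mul _ ((Matrix.isUnit_iff_isUnit_det _).mp hInv')
  have hCe : C *ᵥ (fun _ => (1 : ℝ)) = e := by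
    have h1 : C *ᵥ (fun _ => (1 : ℝ)) = C *ᵥ (V *ᵥ e) := by rw [hVe]
    rw [h1, mulVec_mulVec, hCV, one_mulVec]
  have hsum : ∀ s, (∑ j, C s j) = e s := by
    intro s
    have := congrFun hCe s
    simpa [mulVec, dotProduct] using this
  calc ∑ j, φ j u = ∑ j, ∑ s, C s j * ∏ l, u l ^ ((s.1 l : ℕ)) := by
        simp [hφ]
    _ = ∑ s, (∑ j, C s j) * ∏ l, u l ^ ((s.1 l : ℕ)) := by
        rw [Finset.sum_comm]
        simp [Finset.sum_mul]
    _ = ∑ s, e s * ∏ l, u l ^ ((s.1 l : ℕ)) := by simp [hsum]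
    _ = 1 := by
        simp only [he, ite_mul, one_mul, zero_mul]
        rw [Finset.sum_ite_eq' Finset.univ s₀ (fun s => ∏ l, u l ^ ((s.1 l : ℕ)))]
        simp [hs₀]
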